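/- Let d ≥ 1 be an integer and let Σ and Σ' be real symmetric positive-semidefinite d×d matrices. Then for every ξ ∈ ℝ^d, | exp(−√(ξᵀΣ'ξ)) − exp(−√(ξᵀΣξ)) | ≤ max( exp(−√(ξᵀΣξ)), exp(−√(ξᵀΣ'ξ)) ) · ‖Σ' − Σ‖_op^{1/2} · ‖ξ‖. -/

import Mathlib

noncomputable section

abbrev Euc (d : ℕ) : Type := EuclideanSpace ℝ (Fin d)

noncomputable def opNorm {d : ℕ} (A : Matrix (Fin d) (Fin d) ℝ) : ℝ :=
  ‖LinearMap.toContinuousLinearMap (Matrix.toEuclideanLin A)‖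

def quadForm {d : ℕ} (A : Matrix (Fin d) (Fin d) ℝ) (x : Euc d) : ℝ :=
  ∑ i, ∑ j, x i * A i j * x j

lemma quad_inner {d : ℕ} (A : Matrix (Fin d) (Fin d) ℝ) (x : Euc d) :
    quadForm A x = (inner ℝ x ((Matrix.toEuclideanLin A) x) : ℝ) := by
  simp only [quadForm, Matrix.toEuclideanLin_apply, PiLp.inner_apply, RCLike.inner_apply,
    conj_trivial, Matrix.mulVec, dotProduct, WithLp.ofLp_toLp, Finset.mul_sum, Finset.sum_mul]
  refine Finset.sum_congr rfl fun i _ => ?_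
  refine Finset.sum_congr rfl fun j _ => ?_
  ring

lemma quad_abs_le {d : ℕ} (A : Matrix (Fin d) (Fin d) ℝ) (x : Euc d) :
    |quadForm A x| ≤ opNorm A * ‖x‖ ^ 2 := by
  rw [quad_inner]
  calc |(inner ℝ x ((Matrix.toEuclideanLin A) x) : ℝ)|
      ≤ ‖x‖ * ‖(Matrix.toEuclideanLin A) x‖ := abs_real_inner_le_norm _ _
    _ ≤ ‖x‖ * (opNorm A * ‖x‖) := by
        gcongr
        exact (LinearMap.toContinuousLinearMap (Matrix.toEuclideanLin A)).le_opNorm x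
    _ = opNorm A * ‖x‖ ^ 2 := by ring

lemma quad_sub {d : ℕ} (A B : Matrix (Fin d) (Fin d) ℝ) (x : Euc d) :
    quadForm (B - A) x = quadForm B x - quadForm A x := by
  simp [quadForm, Matrix.sub_apply, mul_sub, sub_mul, Finset.sum_sub_distrib]

lemma quad_nonneg {d : ℕ} {A : Matrix (Fin d) (Fin d) ℝ} (hA : A.PosSemidef) (x : Euc d) :
    0 ≤ quadForm A x := by
  have h := hA.dotProduct_mulVec_nonneg (fun i => x i)
  simp only [RCLike.re_to_real, dotProduct, Matrix.mulVec, Pi.star_apply,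
    star_trivial, Finset.mul_sum] at h
  calc (0:ℝ) ≤ _ := h
    _ = quadForm A x := by
      refine Finset.sum_congr rfl fun i _ => ?_
      refine Finset.sum_congr rfl fun j _ => ?_
      ring

lemma exp_key (s t : ℝ) (h : s ≤ t) :
    |Real.exp (-t) - Real.exp (-s)| ≤ Real.exp (-s) * (t - s) := by
  have h1 := Real.add_one_le_exp (-(t - s))
  have h2 : Real.exp (-t) = Real.exp (-s) * Real.exp (-(t - s)) := by
    rw [← Real.exp_add]; ring_nf
  have h3 : Real.exp (-t) ≤ Real.exp (-s) := Real.exp_le_exp.2 (by linarith)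
  rw [abs_of_nonpos (by linarith)]
  nlinarith [Real.exp_pos (-s)]

lemma sqrt_abs_key (p q : ℝ) (hq : 0 ≤ q) (h : q ≤ p) :
    Real.sqrt p - Real.sqrt q ≤ Real.sqrt (p - q) := by
  nlinarith [Real.sq_sqrt (sub_nonneg.2 h), Real.sq_sqrt hq, Real.sq_sqrt (hq.trans h),
    Real.sqrt_nonneg (p - q), Real.sqrt_nonneg q, Real.sqrt_nonneg p,
    mul_nonneg (Real.sqrt_nonneg (p - q)) (Real.sqrt_nonneg q)]

theorem cauchy_charfun_scale_estimate
    (d : ℕ) (hd : 1 ≤ d) (A B : Matrix (Fin d) (Fin d) ℝ)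
    (hA : A.PosSemidef) (hB : B.PosSemidef) (ξ : Euc d) :
    |Real.exp (-Real.sqrt (quadForm B ξ)) - Real.exp (-Real.sqrt (quadForm A ξ))| ≤
      max (Real.exp (-Real.sqrt (quadForm A ξ))) (Real.exp (-Real.sqrt (quadForm B ξ))) *
        opNorm (B - A) ^ ((1 : ℝ) / 2) * ‖ξ‖ := by
  set p := quadForm A ξ with hp
  set q := quadForm B ξ with hq
  have hp0 : 0 ≤ p := quad_nonneg hA ξ
  have hq0 : 0 ≤ q := quad_nonneg hB ξ
  set a := Real.sqrt p
  set b := Real.sqrt q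
  set M := max (Real.exp (-a)) (Real.exp (-b)) with hM
  -- Step 1: Lipschitz bound
  have step1 : |Real.exp (-b) - Real.exp (-a)| ≤ M * |b - a| := by
    rcases le_total a b with h | h
    · calc |Real.exp (-b) - Real.exp (-a)| ≤ Real.exp (-a) * (b - a) := exp_key a b h
        _ ≤ M * |b - a| := by
          rw [abs_of_nonneg (by linarith)]
          exact mul_le_mul_of_nonneg_right (le_max_left _ _) (by linarith)
    · rw [abs_sub_comm]
      calc |Real.exp (-a) - Real.exp (-b)| ≤ Real.exp (-b) * (a - b) := exp_key b a h
        _ ≤ M * |b - a| := by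
          rw [abs_sub_comm, abs_of_nonneg (by linarith)]
          exact mul_le_mul_of_nonneg_right (le_max_right _ _) (by linarith)
  -- Step 2: |b - a| ≤ sqrt |q - p|
  have step2 : |b - a| ≤ Real.sqrt |q - p| := by
    rcases le_total p q with h | h
    · rw [abs_of_nonneg (by exact sub_nonneg.2 (Real.sqrt_le_sqrt h)),
        abs_of_nonneg (sub_nonneg.2 h)]
      exact sqrt_abs_key q p hp0 h
    · rw [abs_of_nonpos (by exact sub_nonpos.2 (Real.sqrt_le_sqrt h)),
        abs_of_nonpos (sub_nonpos.2 h), neg_sub, neg_sub]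
      exact sqrt_abs_key p q hq0 h
  -- Step 3: sqrt |q - p| ≤ opNorm^(1/2) * ‖ξ‖
  have step3 : Real.sqrt |q - p| ≤ opNorm (B - A) ^ ((1 : ℝ) / 2) * ‖ξ‖ := by
    have h1 : |q - p| ≤ opNorm (B - A) * ‖ξ‖ ^ 2 := by
      rw [hp, hq, ← quad_sub]
      exact quad_abs_le (B - A) ξ
    calc Real.sqrt |q - p| ≤ Real.sqrt (opNorm (B - A) * ‖ξ‖ ^ 2) := Real.sqrt_le_sqrt h1
      _ = Real.sqrt (opNorm (B - A)) * ‖ξ‖ := by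
        rw [Real.sqrt_mul (by unfold opNorm; positivity) (‖ξ‖ ^ 2), Real.sqrt_sq (norm_nonneg _)]
      _ = opNorm (B - A) ^ ((1 : ℝ) / 2) * ‖ξ‖ := by rw [Real.sqrt_eq_rpow]
  have hM0 : 0 ≤ M := le_max_of_le_left (Real.exp_pos _).le
  calc |Real.exp (-b) - Real.exp (-a)| ≤ M * |b - a| := step1
    _ ≤ M * (opNorm (B - A) ^ ((1 : ℝ) / 2) * ‖ξ‖) := by
        gcongr
        exact step2.trans step3
    _ = M * opNorm (B - A) ^ ((1 : ℝ) / 2) * ‖ξ‖ := by ring
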